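/- Let n ≥ 1, let ρ : Fin n → ℝ with ρ i > 0 for all i, and let b : Fin n → Fin n → ℝ satisfy b i j = b j i > 0 for all i ≠ j. Define B ∈ Matrix (Fin n) (Fin n) ℝ by B i i = ∑_{j ≠ i} b i j * ρ i * ρ j and B i j = -(b i j * ρ i * ρ j) for i ≠ j. Then for d : Fin n → ℝ, the linear system B *ᵥ x = d has a solution if and only if ∑_i d i = 0. -/

import Mathlib

open Finset Matrix

theorem friction_matrix_solvability
    (n : ℕ) (hn : 1 ≤ n)
    (ρ : Fin n → ℝ) (hρ : ∀ i, 0 < ρ i)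
    (b : Fin n → Fin n → ℝ)
    (hb : ∀ i j, i ≠ j → b i j = b j i)
    (hbpos : ∀ i j, i ≠ j → 0 < b i j)
    (B : Matrix (Fin n) (Fin n) ℝ)
    (hBdiag : ∀ i, B i i = ∑ j ∈ Finset.univ.erase i, b i j * ρ i * ρ j)
    (hBoff : ∀ i j, i ≠ j → B i j = -(b i j * ρ i * ρ j))
    (d : Fin n → ℝ) :
    (∃ x : Fin n → ℝ, B *ᵥ x = d) ↔ ∑ i, d i = 0 := by
  -- column sums of B vanish
  have hcol : ∀ j, ∑ i, B i j = 0 := by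
    intro j
    rw [← Finset.add_sum_erase _ _ (Finset.mem_univ j), hBdiag j]
    rw [← Finset.sum_add_distrib]
    apply Finset.sum_eq_zero
    intro i hi
    have hij : j ≠ i := (Finset.ne_of_mem_erase hi).symm
    rw [hBoff i j (Ne.symm hij), hb i j (Ne.symm hij)]
    ring
  constructor
  · rintro ⟨x, rfl⟩
    have : ∑ i, (B *ᵥ x) i = ∑ j, (∑ i, B i j) * x j := by
      simp only [Matrix.mulVec, dotProduct]
      rw [Finset.sum_comm]
      simp [Finset.sum_mul]
    rw [this]
    simp [hcol]
  · intro hd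
    set f := B.mulVecLin with hf
    set σ : (Fin n → ℝ) →ₗ[ℝ] ℝ := ∑ i, LinearMap.proj i with hσ
    have hσapp : ∀ v : Fin n → ℝ, σ v = ∑ i, v i := by
      intro v; simp [hσ]
    -- range f ≤ ker σ
    have hle : LinearMap.range f ≤ LinearMap.ker σ := by
      rintro _ ⟨x, rfl⟩
      rw [LinearMap.mem_ker, hσapp]
      have : ∑ i, (B *ᵥ x) i = ∑ j, (∑ i, B i j) * x j := by
        simp only [Matrix.mulVec, dotProduct]
        rw [Finset.sum_comm]
        simp [Finset.sum_mul]
      simpa [hf, this] using this.trans (by simp [hcol])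
    -- ker f ≤ span of all-ones
    have hker : LinearMap.ker f ≤ Submodule.span ℝ {(fun _ => 1 : Fin n → ℝ)} := by
      intro x hx
      have hBx : B *ᵥ x = 0 := hx
      -- pick a maximizer
      have hne : (Finset.univ : Finset (Fin n)).Nonempty := by
        rw [Finset.univ_nonempty_iff]
        exact Fin.pos_iff_nonempty.mp hn
      obtain ⟨i₀, -, hi₀⟩ := Finset.exists_max_image Finset.univ x hne
      have hrow : (B *ᵥ x) i₀ = 0 := by rw [hBx]; rfl
      have hrow2 : ∑ j ∈ Finset.univ.erase i₀,
          b i₀ j * ρ i₀ * ρ j * (x i₀ - x j) = 0 := by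
        have : (B *ᵥ x) i₀ = ∑ j, B i₀ j * x j := by
          simp [Matrix.mulVec, dotProduct]
        rw [this, ← Finset.add_sum_erase _ _ (Finset.mem_univ i₀), hBdiag i₀,
          Finset.sum_mul, ← Finset.sum_add_distrib] at hrow
        rw [← hrow]
        apply Finset.sum_congr rfl
        intro j hj
        have hij : i₀ ≠ j := (Finset.ne_of_mem_erase hj).symm
        rw [hBoff i₀ j hij]
        ring
      have hxeq : ∀ j, x j = x i₀ := by
        intro j
        rcases eq_or_ne j i₀ with h | h
        · rw [h]
        · have hmem : j ∈ Finset.univ.erase i₀ := Finset.mem_erase.mpr ⟨h, Finset.mem_univ j⟩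
          have hterm : ∀ k ∈ Finset.univ.erase i₀,
              0 ≤ b i₀ k * ρ i₀ * ρ k * (x i₀ - x k) := by
            intro k hk
            have hik : i₀ ≠ k := (Finset.ne_of_mem_erase hk).symm
            have := hbpos i₀ k hik
            have h1 := hρ i₀
            have h2 := hρ k
            have h3 : 0 ≤ x i₀ - x k := sub_nonneg.mpr (hi₀ k (Finset.mem_univ k))
            positivity
          have := (Finset.sum_eq_zero_iff_of_nonneg hterm).mp hrow2 j hmem
          have hij : i₀ ≠ j := Ne.symm h
          have hpos : 0 < b i₀ j * ρ i₀ * ρ j := by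
            have := hbpos i₀ j hij
            have h1 := hρ i₀
            have h2 := hρ j
            positivity
          have : x i₀ - x j = 0 := by
            rcases mul_eq_zero.mp this with h' | h'
            · exact absurd h' (ne_of_gt hpos)
            · exact h'
          linarith
      have : x = x i₀ • (fun _ => 1 : Fin n → ℝ) := by
        funext j; simp [hxeq j]
      rw [this]
      exact Submodule.smul_mem _ _ (Submodule.mem_span_singleton_self _)
    -- dimension counting
    have hrn : Module.finrank ℝ (LinearMap.range f) + Module.finrank ℝ (LinearMap.ker f)
        = n := by
      rw [LinearMap.finrank_range_add_finrank_ker f]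
      simp
    have hkerdim : Module.finrank ℝ (LinearMap.ker f) ≤ 1 := by
      calc Module.finrank ℝ (LinearMap.ker f)
          ≤ Module.finrank ℝ (Submodule.span ℝ {(fun _ => 1 : Fin n → ℝ)}) :=
            Submodule.finrank_mono hker
        _ ≤ 1 := by
            have : Module.finrank ℝ (Submodule.span ℝ ({(fun _ => 1 : Fin n → ℝ)} : Set (Fin n → ℝ))) ≤ ({(fun _ => 1 : Fin n → ℝ)} : Set (Fin n → ℝ)).toFinset.card :=
              finrank_span_le_card _
            simpa using this
    have hσsurj : Function.Surjective σ := by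
      intro c
      refine ⟨fun _ => c / n, ?_⟩
      rw [hσapp]
      have hn0 : (n : ℝ) ≠ 0 := Nat.cast_ne_zero.mpr (by omega)
      field_simp
      rw [Finset.sum_const, Finset.card_univ, Fintype.card_fin, nsmul_eq_mul]; field_simp
    have hσkerdim : Module.finrank ℝ (LinearMap.ker σ) = n - 1 := by
      have h1 : Module.finrank ℝ (LinearMap.range σ) + Module.finrank ℝ (LinearMap.ker σ)
          = n := by
        rw [LinearMap.finrank_range_add_finrank_ker σ]
        simp
      have h2 : LinearMap.range σ = ⊤ := LinearMap.range_eq_top.mpr hσsurj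
      rw [h2] at h1
      simp at h1
      omega
    have heq : LinearMap.range f = LinearMap.ker σ := by
      apply Submodule.eq_of_le_of_finrank_le hle
      rw [hσkerdim]
      omega
    have hd' : d ∈ LinearMap.ker σ := by
      rw [LinearMap.mem_ker, hσapp]; exact hd
    rw [← heq] at hd'
    obtain ⟨x, hx⟩ := hd'
    exact ⟨x, hx⟩
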